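/- For any finite sets U, U' of reduced words, the multi-cylinders C¹_U and C¹_{U'} are equal if and only if U and U' are related by the equivalence relation generated by elementary reductions (removal of an element having a proper prefix in the set, or replacing the full set u|^1 of one-letter extensions of a word u by u itself). -/

import Mathlib

open List

variable {A : Type*} [Fintype A] [DecidableEq A]

/-- The formal inverse of a letter in `A ∪ A⁻¹`, encoded as `A × Bool`. -/
def Linv (x : A × Bool) : A × Bool := (x.1, !x.2)

/-- A finite word is reduced if no letter is followed by its inverse. -/
def RedWord (w : List (A × Bool)) : Prop := w.Chain' (fun x y => y ≠ Linv x)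

/-- An infinite word is reduced if no letter is followed by its inverse. -/
def InfRed (X : ℕ → A × Bool) : Prop := ∀ n, X (n + 1) ≠ Linv (X n)

/-- The boundary `∂F(A)`: the set of infinite reduced words. -/
abbrev Bdry (A : Type*) := {X : ℕ → A × Bool // InfRed X}

/-- The prefix of length `n` of an infinite word. -/
def wpre (X : ℕ → A × Bool) (n : ℕ) : List (A × Bool) := (List.range n).map X

/-- The cylinder `C¹_u`: infinite reduced words having `u` as a prefix. -/
def Cyl (u : List (A × Bool)) : Set (Bdry A) := {X | wpre X.val u.length = u}

/-- The multi-cylinder `C¹_U` for a finite set `U` of words. -/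
def CylS (U : Finset (List (A × Bool))) : Set (Bdry A) := ⋃ u ∈ U, Cyl u

/-- `u|^k` : the set of reduced words obtained from `u` by appending `k` letters. -/
def extW (u : List (A × Bool)) (k : ℕ) : Set (List (A × Bool)) :=
  {v | RedWord v ∧ u <+: v ∧ v.length = u.length + k}

/-- The elementary reduction relation `U ↘ U'` on finite sets of reduced words. -/
def Step (U U' : Finset (List (A × Bool))) : Prop :=
  (∀ w ∈ U, RedWord w) ∧ (∀ w ∈ U', RedWord w) ∧
    ((∃ ui uj, ui ∈ U ∧ uj ∈ U ∧ ui ≠ uj ∧ ui <+: uj ∧ U' = U.erase uj) ∨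
     (∃ u E, u ∉ U ∧ (∀ v, v ∈ E ↔ v ∈ extW u 1) ∧ E ⊆ U ∧ U' = (U \ E) ∪ {u}))

/-! ### Auxiliary lemmas -/

lemma ne_linv_self (x : A × Bool) : x ≠ Linv x := by
  intro h
  have := congrArg Prod.snd h
  simp [Linv] at this

lemma RedWord.of_prefix {w v : List (A × Bool)} (h : RedWord w) (hp : v <+: w) :
    RedWord v := List.IsChain.prefix h hp

lemma wpre_length (X : ℕ → A × Bool) (n : ℕ) : (wpre X n).length = n := by
  simp [wpre]

lemma wpre_take (X : ℕ → A × Bool) {m n : ℕ} (h : m ≤ n) :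
    (wpre X n).take m = wpre X m := by
  simp [wpre, ← List.map_take, List.take_range, Nat.min_eq_left h]

lemma wpre_prefix (X : ℕ → A × Bool) {m n : ℕ} (h : m ≤ n) :
    wpre X m <+: wpre X n := by
  rw [← wpre_take X h]; exact List.take_prefix _ _

lemma wpre_get (X : ℕ → A × Bool) {n i : ℕ} (h : i < n) :
    (wpre X n).get ⟨i, by simp [wpre_length, h]⟩ = X i := by
  simp [wpre]

lemma redword_wpre {X : ℕ → A × Bool} (hX : InfRed X) (n : ℕ) :
    RedWord (wpre X n) := by
  show List.IsChain _ (wpre X n); rw [List.isChain_iff_getElem]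
  intro i hi
  have hlen : (wpre X n).length = n := wpre_length X n
  rw [hlen] at hi
  have h1 : i < n := lt_of_lt_of_le (Nat.lt_of_lt_of_le (Nat.lt_succ_self i)
    (by omega)) (le_refl n)
  have h2 : i + 1 < n := by omega
  simp only [wpre, List.getElem_map, List.getElem_range]
  exact hX i

lemma cyl_mono {u v : List (A × Bool)} (h : u <+: v) : Cyl v ⊆ Cyl u := by
  intro X hX
  have hlen : u.length ≤ v.length := h.length_le
  have h1 : wpre X.val u.length = (wpre X.val v.length).take u.length :=
    (wpre_take X.val hlen).symm
  have hXv : wpre X.val v.length = v := hX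
  show wpre X.val u.length = u
  rw [h1, hXv]
  exact (List.prefix_iff_eq_take.mp h).symm

lemma mem_cyl_iff_prefix {u : List (A × Bool)} {X : Bdry A} :
    X ∈ Cyl u ↔ u = (wpre X.val u.length) := by
  constructor <;> (intro h; exact h.symm)

/-- Every reduced word is the prefix of some infinite reduced word. -/
lemma cyl_nonempty (hA : 2 ≤ Fintype.card A) {u : List (A × Bool)} (hu : RedWord u) :
    (Cyl u).Nonempty := by
  have hAne : Nonempty A := Fintype.card_pos_iff.mp (by omega)
  obtain ⟨a₀⟩ := hAne
  set d : A × Bool := u.getLastD (a₀, true) with hd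
  set X : ℕ → A × Bool := fun n => u.getD n d with hX
  have hXlt : ∀ i (h : i < u.length), X i = u.get ⟨i, h⟩ := by
    intro i h; simp [hX, List.getD_eq_getElem, h]
  have hXge : ∀ i, u.length ≤ i → X i = d := by
    intro i h
    simp only [hX, List.getD_eq_getElem?_getD]
    rw [List.getElem?_eq_none h]
    rfl
  have hinf : InfRed X := by
    intro n
    rcases lt_trichotomy (n + 1) u.length with h | h | h
    · have hn : n < u.length := by omega
      rw [hXlt _ h, hXlt _ hn]
      exact (List.isChain_iff_getElem.mp hu) n (by omega)
    · -- n + 1 = u.length, so u is nonempty and X n = last = d, X (n+1) = d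
      have hne : u ≠ [] := by intro hh; rw [hh] at h; simp at h
      have hn : n < u.length := by omega
      have : X n = d := by
        rw [hXlt _ hn, hd]
        rw [List.getLastD_eq_getLast? , List.getLast?_eq_getLast hne]
        simp only [Option.getD_some, List.getLast_eq_getElem, List.get_eq_getElem]
        congr 1
        omega
      rw [this, hXge _ (by omega)]
      exact ne_linv_self d
    · rw [hXge _ (by omega), hXge _ (by omega)]
      exact ne_linv_self d
  refine ⟨⟨X, hinf⟩, ?_⟩
  show wpre X u.length = u
  apply List.ext_get (by simp [wpre_length])
  intro i h1 h2
  rw [wpre_length] at h1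
  rw [wpre_get X h1]
  exact hXlt i h1

lemma mem_cylS {U : Finset (List (A × Bool))} {X : Bdry A} :
    X ∈ CylS U ↔ ∃ u ∈ U, X ∈ Cyl u := by
  simp [CylS]

lemma cylS_union (U V : Finset (List (A × Bool))) :
    CylS (U ∪ V) = CylS U ∪ CylS V := by
  ext X
  simp only [mem_cylS, Set.mem_union, Finset.mem_union]
  constructor
  · rintro ⟨u, h | h, hX⟩
    exacts [Or.inl ⟨u, h, hX⟩, Or.inr ⟨u, h, hX⟩]
  · rintro (⟨u, h, hX⟩ | ⟨u, h, hX⟩)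
    exacts [⟨u, Or.inl h, hX⟩, ⟨u, Or.inr h, hX⟩]

/-- A cylinder is the union of the cylinders over its one-letter extensions. -/
lemma mem_cyl_iff_ext {u : List (A × Bool)} (hu : RedWord u) (X : Bdry A) :
    X ∈ Cyl u ↔ ∃ v ∈ extW u 1, X ∈ Cyl v := by
  constructor
  · intro hX
    refine ⟨wpre X.val (u.length + 1), ?_, ?_⟩
    · refine ⟨redword_wpre X.2 _, ?_, by rw [wpre_length]⟩
      have : wpre X.val u.length <+: wpre X.val (u.length + 1) :=
        wpre_prefix X.val (Nat.le_succ _)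
      rwa [hX] at this
    · show wpre X.val _ = _
      rw [wpre_length]
    -- done
  · rintro ⟨v, ⟨_, hpre, _⟩, hX⟩
    exact cyl_mono hpre hX

lemma step_cylS {U U' : Finset (List (A × Bool))} (h : Step U U') :
    CylS U = CylS U' := by
  obtain ⟨hU, hU', hcase⟩ := h
  rcases hcase with ⟨ui, uj, hi, hj, hne, hpre, rfl⟩ | ⟨u, E, huU, hE, hEU, rfl⟩
  · ext X
    simp only [mem_cylS]
    constructor
    · rintro ⟨w, hw, hXw⟩
      by_cases hwj : w = uj
      · exact ⟨ui, Finset.mem_erase.mpr ⟨hne, hi⟩, cyl_mono hpre (hwj ▸ hXw)⟩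
      · exact ⟨w, Finset.mem_erase.mpr ⟨hwj, hw⟩, hXw⟩
    · rintro ⟨w, hw, hXw⟩
      exact ⟨w, Finset.mem_of_mem_erase hw, hXw⟩
  · have huRed : RedWord u := hU' u (by simp)
    ext X
    simp only [mem_cylS]
    constructor
    · rintro ⟨w, hw, hXw⟩
      by_cases hwE : w ∈ E
      · have : u <+: w := ((hE w).mp hwE).2.1
        exact ⟨u, by simp, cyl_mono this hXw⟩
      · exact ⟨w, by simp [Finset.mem_union, Finset.mem_sdiff, hw, hwE], hXw⟩
    · rintro ⟨w, hw, hXw⟩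
      rcases Finset.mem_union.mp hw with hw | hw
      · exact ⟨w, (Finset.mem_sdiff.mp hw).1, hXw⟩
      · have hwu : w = u := Finset.mem_singleton.mp hw
        subst hwu
        obtain ⟨v, hv, hXv⟩ := (mem_cyl_iff_ext huRed X).mp hXw
        exact ⟨v, hEU ((hE v).mpr hv), hXv⟩

/-! ### One-letter extensions as a finset -/

instance redWordDecidable (w : List (A × Bool)) : Decidable (RedWord w) :=
  inferInstanceAs (Decidable (w.IsChain fun x y => y ≠ Linv x))

/-- The finset of reduced one-letter extensions of `u`. -/
def oneExt (u : List (A × Bool)) : Finset (List (A × Bool)) :=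
  (Finset.univ.filter (fun x : A × Bool => RedWord (u ++ [x]))).image (fun x => u ++ [x])

lemma mem_oneExt {u v : List (A × Bool)} (hu : RedWord u) :
    v ∈ oneExt u ↔ v ∈ extW u 1 := by
  simp only [oneExt, Finset.mem_image, Finset.mem_filter, Finset.mem_univ, true_and]
  constructor
  · rintro ⟨x, hx, rfl⟩
    exact ⟨hx, List.prefix_append u [x], by simp⟩
  · rintro ⟨hv, ⟨t, rfl⟩, hlen⟩
    rw [List.length_append] at hlen
    have : t.length = 1 := by omega
    obtain ⟨x, rfl⟩ := List.length_eq_one_iff.mp this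
    exact ⟨x, hv, rfl⟩

/-- `k`-fold reduced extensions of a word, as a finset. -/
def extF : ℕ → List (A × Bool) → Finset (List (A × Bool))
  | 0, u => {u}
  | k + 1, u => (oneExt u).biUnion (fun w => extF k w)

lemma mem_extF : ∀ (k : ℕ) {u v : List (A × Bool)}, RedWord u →
    (v ∈ extF k u ↔ RedWord v ∧ u <+: v ∧ v.length = u.length + k) := by
  intro k
  induction k with
  | zero =>
    intro u v hu
    simp only [extF, Finset.mem_singleton]
    constructor
    · rintro rfl; exact ⟨hu, List.prefix_refl v, rfl⟩
    · rintro ⟨_, hpre, hlen⟩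
      exact (List.IsPrefix.eq_of_length hpre (by omega)).symm
  | succ k ih =>
    intro u v hu
    simp only [extF, Finset.mem_biUnion]
    constructor
    · rintro ⟨w, hw, hv⟩
      obtain ⟨hwred, hwpre, hwlen⟩ := (mem_oneExt hu).mp hw
      obtain ⟨hvred, hvpre, hvlen⟩ := (ih hwred).mp hv
      exact ⟨hvred, hwpre.trans hvpre, by omega⟩
    · rintro ⟨hvred, hvpre, hvlen⟩
      refine ⟨v.take (u.length + 1), ?_, ?_⟩
      · rw [mem_oneExt hu]
        refine ⟨hvred.of_prefix (List.take_prefix _ _), ?_, ?_⟩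
        · rw [List.prefix_take_iff]
          exact ⟨hvpre, by omega⟩
        · rw [List.length_take]; omega
      · rw [ih (hvred.of_prefix (List.take_prefix _ _))]
        refine ⟨hvred, List.take_prefix _ _, ?_⟩
        rw [List.length_take]; omega

/-- The set of all reduced words of length `n` extending some word of `U`. -/
def levelN (n : ℕ) (U : Finset (List (A × Bool))) : Finset (List (A × Bool)) :=
  U.biUnion (fun u => extF (n - u.length) u)

lemma mem_levelN {n : ℕ} {U : Finset (List (A × Bool))} {v : List (A × Bool)}
    (hU : ∀ u ∈ U, RedWord u) (hlen : ∀ u ∈ U, u.length ≤ n) :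
    v ∈ levelN n U ↔ RedWord v ∧ v.length = n ∧ ∃ u ∈ U, u <+: v := by
  simp only [levelN, Finset.mem_biUnion]
  constructor
  · rintro ⟨u, hu, hv⟩
    obtain ⟨hvred, hvpre, hvlen⟩ := (mem_extF _ (hU u hu)).mp hv
    have := hlen u hu
    exact ⟨hvred, by omega, u, hu, hvpre⟩
  · rintro ⟨hvred, hvlen, u, hu, hvpre⟩
    refine ⟨u, hu, (mem_extF _ (hU u hu)).mpr ⟨hvred, hvpre, ?_⟩⟩
    have h1 := hlen u hu
    have h2 := hvpre.length_le
    omega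

/-- The measure used for the termination of the normalization procedure. -/
def msr (n : ℕ) (U : Finset (List (A × Bool))) : ℕ :=
  ∑ u ∈ U, (2 * Fintype.card A + 1) ^ (n - u.length)

lemma card_oneExt_le (u : List (A × Bool)) :
    (oneExt u).card ≤ 2 * Fintype.card A := by
  calc (oneExt u).card ≤ (Finset.univ.filter (fun x : A × Bool => RedWord (u ++ [x]))).card :=
        Finset.card_image_le
    _ ≤ (Finset.univ : Finset (A × Bool)).card := Finset.card_filter_le _ _
    _ = 2 * Fintype.card A := by
        rw [Finset.card_univ, Fintype.card_prod, Fintype.card_bool]; ring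

/-! ### Normalization: every set is equivalent to its level-n set -/

lemma eqvGen_levelN (n : ℕ) :
    ∀ (N : ℕ) (U : Finset (List (A × Bool))), msr n U ≤ N →
    (∀ w ∈ U, RedWord w) → (∀ w ∈ U, w.length ≤ n) →
    Relation.EqvGen Step U (levelN n U) := by
  intro N
  induction N with
  | zero =>
    intro U hm hU hlen
    have : U = ∅ := by
      by_contra hne
      obtain ⟨u, hu⟩ := Finset.nonempty_iff_ne_empty.mpr hne
      have h1 : 1 ≤ (2 * Fintype.card A + 1) ^ (n - u.length) := Nat.one_le_pow _ _ (by omega)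
      have h2 : (2 * Fintype.card A + 1) ^ (n - u.length) ≤ msr n U :=
        Finset.single_le_sum (f := fun u => (2 * Fintype.card A + 1) ^ (n - u.length))
          (fun i _ => Nat.zero_le _) hu
      omega
    subst this
    have : levelN n (∅ : Finset (List (A × Bool))) = ∅ := by simp [levelN]
    rw [this]
    exact Relation.EqvGen.refl ∅
  | succ N ih =>
    intro U hm hU hlen
    by_cases hall : ∀ u ∈ U, u.length = n
    · -- terminal: levelN n U = U
      have : levelN n U = U := by
        ext v
        rw [mem_levelN hU hlen]
        constructor
        · rintro ⟨hvred, hvlen, u, hu, hpre⟩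
          have : u = v := hpre.eq_of_length (by rw [hall u hu, hvlen])
          rwa [← this]
        · intro hv
          exact ⟨hU v hv, hall v hv, v, hv, List.prefix_refl v⟩
      rw [this]
      exact Relation.EqvGen.refl U
    · push_neg at hall
      obtain ⟨u₀, hu₀, hu₀len⟩ := hall
      have hu₀lt : u₀.length < n := lt_of_le_of_ne (hlen u₀ hu₀) hu₀len
      by_cases hpair : ∃ ui ∈ U, ∃ uj ∈ U, ui ≠ uj ∧ ui <+: uj
      · -- shrink
        obtain ⟨ui, hi, uj, hj, hne, hpre⟩ := hpair
        set U₁ := U.erase uj with hU₁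
        have hU₁sub : U₁ ⊆ U := Finset.erase_subset _ _
        have hU₁red : ∀ w ∈ U₁, RedWord w := fun w hw => hU w (hU₁sub hw)
        have hU₁len : ∀ w ∈ U₁, w.length ≤ n := fun w hw => hlen w (hU₁sub hw)
        have hstep : Step U U₁ := ⟨hU, hU₁red, Or.inl ⟨ui, uj, hi, hj, hne, hpre, rfl⟩⟩
        have hmsr : msr n U₁ < msr n U := by
          rw [hU₁, msr, msr, ← Finset.sum_erase_add U _ hj]
          have : 1 ≤ (2 * Fintype.card A + 1) ^ (n - uj.length) := Nat.one_le_pow _ _ (by omega)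
          omega
        have hlev : levelN n U₁ = levelN n U := by
          ext v
          rw [mem_levelN hU₁red hU₁len, mem_levelN hU hlen]
          constructor
          · rintro ⟨h1, h2, w, hw, h3⟩; exact ⟨h1, h2, w, hU₁sub hw, h3⟩
          · rintro ⟨h1, h2, w, hw, h3⟩
            by_cases hwj : w = uj
            · exact ⟨h1, h2, ui, Finset.mem_erase.mpr ⟨hne, hi⟩, hpre.trans (hwj ▸ h3)⟩
            · exact ⟨h1, h2, w, Finset.mem_erase.mpr ⟨hwj, hw⟩, h3⟩
        have := ih U₁ (by omega) hU₁red hU₁len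
        rw [hlev] at this
        exact Relation.EqvGen.trans _ _ _ (Relation.EqvGen.rel _ _ hstep) this
      · -- antichain: expand u₀
        push_neg at hpair
        set E := oneExt u₀ with hEdef
        have hu₀red : RedWord u₀ := hU u₀ hu₀
        have hEchar : ∀ v, v ∈ E ↔ v ∈ extW u₀ 1 := fun v => mem_oneExt hu₀red
        have hEnotU : ∀ v ∈ E, v ∉ U := by
          intro v hv hvU
          obtain ⟨_, hpre, hlen'⟩ := (hEchar v).mp hv
          exact hpair u₀ hu₀ v hvU (fun h => by rw [h] at hlen'; omega) hpre
        set U₂ := (U.erase u₀) ∪ E with hU₂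
        have hU₂red : ∀ w ∈ U₂, RedWord w := by
          intro w hw
          rcases Finset.mem_union.mp hw with hw | hw
          · exact hU w (Finset.mem_of_mem_erase hw)
          · exact ((hEchar w).mp hw).1
        have hU₂len : ∀ w ∈ U₂, w.length ≤ n := by
          intro w hw
          rcases Finset.mem_union.mp hw with hw | hw
          · exact hlen w (Finset.mem_of_mem_erase hw)
          · have := ((hEchar w).mp hw).2.2
            omega
        have hu₀notU₂ : u₀ ∉ U₂ := by
          rw [hU₂, Finset.mem_union]
          rintro (h | h)
          · exact (Finset.mem_erase.mp h).1 rfl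
          · have := ((hEchar u₀).mp h).2.2; omega
        have hEsubU₂ : E ⊆ U₂ := Finset.subset_union_right
        have hstep : Step U₂ U := by
          refine ⟨hU₂red, hU, Or.inr ⟨u₀, E, hu₀notU₂, hEchar, hEsubU₂, ?_⟩⟩
          -- U = (U₂ \ E) ∪ {u₀}
          ext w
          simp only [Finset.mem_union, Finset.mem_sdiff, Finset.mem_singleton, hU₂,
            Finset.mem_erase]
          constructor
          · intro hw
            by_cases hwu : w = u₀
            · exact Or.inr hwu
            · exact Or.inl ⟨Or.inl ⟨hwu, hw⟩, fun hE => hEnotU w hE hw⟩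
          · rintro (⟨(⟨_, hw⟩ | hwE), hnE⟩ | rfl)
            · exact hw
            · exact absurd hwE hnE
            · exact hu₀
        have hmsr : msr n U₂ < msr n U := by
          have hdisj : Disjoint (U.erase u₀) E := by
            rw [Finset.disjoint_right]
            intro v hv hvU
            exact hEnotU v hv (Finset.mem_of_mem_erase hvU)
          rw [hU₂, msr, Finset.sum_union hdisj]
          have hU' : msr n U = (∑ u ∈ U.erase u₀, (2 * Fintype.card A + 1) ^ (n - u.length))
              + (2 * Fintype.card A + 1) ^ (n - u₀.length) := by
            rw [msr, ← Finset.sum_erase_add U _ hu₀]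
          rw [hU']
          have hEsum : ∑ u ∈ E, (2 * Fintype.card A + 1) ^ (n - u.length)
              < (2 * Fintype.card A + 1) ^ (n - u₀.length) := by
            have hterm : ∀ u ∈ E, (2 * Fintype.card A + 1) ^ (n - u.length)
                = (2 * Fintype.card A + 1) ^ (n - u₀.length - 1) := by
              intro u hu
              have := ((hEchar u).mp hu).2.2
              congr 1
              omega
            rw [Finset.sum_congr rfl hterm, Finset.sum_const, smul_eq_mul]
            have h1 : E.card ≤ 2 * Fintype.card A := card_oneExt_le u₀
            have h2 : n - u₀.length = (n - u₀.length - 1) + 1 := by omega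
            rw [h2, pow_succ]
            calc E.card * (2 * Fintype.card A + 1) ^ (n - u₀.length - 1)
                ≤ (2 * Fintype.card A) * (2 * Fintype.card A + 1) ^ (n - u₀.length - 1) :=
                  Nat.mul_le_mul_right _ h1
              _ < (2 * Fintype.card A + 1) ^ (n - u₀.length - 1) * (2 * Fintype.card A + 1) := by
                  have hp : 0 < (2 * Fintype.card A + 1) ^ (n - u₀.length - 1) :=
                    Nat.pow_pos (by omega)
                  nlinarith
          omega
        have hlev : levelN n U₂ = levelN n U := by
          ext v
          rw [mem_levelN hU₂red hU₂len, mem_levelN hU hlen]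
          constructor
          · rintro ⟨h1, h2, w, hw, h3⟩
            rcases Finset.mem_union.mp hw with hw | hw
            · exact ⟨h1, h2, w, Finset.mem_of_mem_erase hw, h3⟩
            · exact ⟨h1, h2, u₀, hu₀, ((hEchar w).mp hw).2.1.trans h3⟩
          · rintro ⟨h1, h2, w, hw, h3⟩
            by_cases hwu : w = u₀
            · subst hwu
              refine ⟨h1, h2, v.take (w.length + 1), ?_, List.take_prefix _ _⟩
              apply hEsubU₂
              rw [hEchar]
              refine ⟨h1.of_prefix (List.take_prefix _ _), ?_, ?_⟩
              · rw [List.prefix_take_iff]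
                exact ⟨h3, by omega⟩
              · rw [List.length_take]
                have := h3.length_le
                omega
            · exact ⟨h1, h2, w, Finset.mem_union_left _ (Finset.mem_erase.mpr ⟨hwu, hw⟩), h3⟩
        have hrec := ih U₂ (by omega) hU₂red hU₂len
        rw [hlev] at hrec
        exact Relation.EqvGen.trans _ _ _
          (Relation.EqvGen.symm _ _ (Relation.EqvGen.rel _ _ hstep)) hrec

/-- Semantic characterization of the level-n set. -/
lemma mem_levelN_iff_cyl (hA : 2 ≤ Fintype.card A) {n : ℕ}
    {U : Finset (List (A × Bool))} {v : List (A × Bool)}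
    (hU : ∀ u ∈ U, RedWord u) (hlen : ∀ u ∈ U, u.length ≤ n) :
    v ∈ levelN n U ↔ RedWord v ∧ v.length = n ∧ Cyl v ⊆ CylS U := by
  rw [mem_levelN hU hlen]
  constructor
  · rintro ⟨h1, h2, u, hu, hpre⟩
    refine ⟨h1, h2, fun X hX => ?_⟩
    exact mem_cylS.mpr ⟨u, hu, cyl_mono hpre hX⟩
  · rintro ⟨h1, h2, hsub⟩
    obtain ⟨X, hX⟩ := cyl_nonempty hA h1
    obtain ⟨u, hu, hXu⟩ := mem_cylS.mp (hsub hX)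
    refine ⟨h1, h2, u, hu, ?_⟩
    -- u = wpre X u.length, v = wpre X v.length, u.length ≤ n = v.length
    have hul : u.length ≤ n := hlen u hu
    have : u = (wpre X.val n).take u.length := by
      rw [wpre_take X.val hul]; exact hXu.symm
    rw [this]
    have hvX : wpre X.val n = v := by rw [← h2]; exact hX
    rw [hvX]
    exact List.take_prefix _ _

theorem multicylinder_eq_iff_eqvGen (hA : 2 ≤ Fintype.card A)
    (U U' : Finset (List (A × Bool)))
    (hU : ∀ w ∈ U, RedWord w) (hU' : ∀ w ∈ U', RedWord w) :
    CylS U = CylS U' ↔ Relation.EqvGen Step U U' := by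
  constructor
  · intro hcyl
    set n := (U ∪ U').sup List.length with hn
    have hlenU : ∀ w ∈ U, w.length ≤ n :=
      fun w hw => Finset.le_sup (Finset.mem_union_left _ hw)
    have hlenU' : ∀ w ∈ U', w.length ≤ n :=
      fun w hw => Finset.le_sup (Finset.mem_union_right _ hw)
    have h1 : Relation.EqvGen Step U (levelN n U) :=
      eqvGen_levelN n (msr n U) U le_rfl hU hlenU
    have h2 : Relation.EqvGen Step U' (levelN n U') :=
      eqvGen_levelN n (msr n U') U' le_rfl hU' hlenU'
    have heq : levelN n U = levelN n U' := by
      ext v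
      rw [mem_levelN_iff_cyl hA hU hlenU, mem_levelN_iff_cyl hA hU' hlenU', hcyl]
    rw [heq] at h1
    exact Relation.EqvGen.trans _ _ _ h1 (Relation.EqvGen.symm _ _ h2)
  · intro h
    clear hU hU'
    induction h with
    | rel _ _ hstep => exact step_cylS hstep
    | refl _ => rfl
    | symm _ _ _ ih => exact ih.symm
    | trans _ _ _ _ _ ih1 ih2 => exact ih1.trans ih2
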